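/- Suppose Assumption 1 (full rank) and Assumption 2 (no separation) hold. Then there exist real coefficients c_{i,d} ≥ 1 (one for each pair (i,d) with i ∈ {1,…,n} and d ∈ B_i) such that ∑_{i=1}^n ∑_{d∈B_i} c_{i,d} v_{i,d} = 0; in particular the minimum of u'u over all u of the form u = ∑_{i,d} c_{i,d} v_{i,d} with c_{i,d} ≥ 1 equals zero. (The other direction of Theorem 2.) -/

import Mathlib

open scoped BigOperators RealInnerProductSpace

noncomputable section

/-- Real value of a binary indicator. -/
def bval (b : Bool) : ℝ := if b then 1 else 0

/-- The alternative set `B_i = {d ∈ {0,1}^T : ∑_t d_t = ∑_t Y_{it}}`. -/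
def altSet (T : ℕ) (Yi : Fin T → Bool) : Finset (Fin T → Bool) :=
  Finset.univ.filter fun d => (∑ t, (d t).toNat) = ∑ t, (Yi t).toNat

/-- The conditional log-likelihood `log L(β)`. -/
def logL {n T p : ℕ} (X : Fin n → Fin T → EuclideanSpace ℝ (Fin p))
    (Y : Fin n → Fin T → Bool) (β : EuclideanSpace ℝ (Fin p)) : ℝ :=
  ∑ i, ((∑ t, bval (Y i t) * ⟪X i t, β⟫) -
    Real.log (∑ d ∈ altSet T (Y i), Real.exp (∑ t, bval (d t) * ⟪X i t, β⟫)))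

/-- The conditional-logit (softmax) weights `w_i(d; β)`. -/
def cweight {n T p : ℕ} (X : Fin n → Fin T → EuclideanSpace ℝ (Fin p))
    (Y : Fin n → Fin T → Bool) (i : Fin n) (d : Fin T → Bool)
    (β : EuclideanSpace ℝ (Fin p)) : ℝ :=
  Real.exp (∑ t, bval (d t) * ⟪X i t, β⟫) /
    ∑ f ∈ altSet T (Y i), Real.exp (∑ t, bval (f t) * ⟪X i t, β⟫)

/-- Row index set of the matrix in Assumption 1: pairs `(i, d)` with `d ∈ B_i`. -/
abbrev RowIdx (n T : ℕ) (Y : Fin n → Fin T → Bool) :=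
  (i : Fin n) × {d : Fin T → Bool // d ∈ altSet T (Y i)}

/-- The matrix of Assumption 1, evaluated at `β`. -/
def rowMat {n T p : ℕ} (X : Fin n → Fin T → EuclideanSpace ℝ (Fin p))
    (Y : Fin n → Fin T → Bool) (β : EuclideanSpace ℝ (Fin p)) :
    Matrix (RowIdx n T Y) (Fin p) ℝ :=
  fun r k =>
    (∑ t, bval (r.2.1 t) * X r.1 t k) -
      ∑ e ∈ altSet T (Y r.1),
        cweight X Y r.1 e β * ∑ t, bval (e t) * X r.1 t k

/-- Assumption 1 (full rank). -/
def Assumption1 {n T p : ℕ} (X : Fin n → Fin T → EuclideanSpace ℝ (Fin p))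
    (Y : Fin n → Fin T → Bool) : Prop :=
  ∀ β : EuclideanSpace ℝ (Fin p), (rowMat X Y β).rank = p

/-- Assumption 2 (no separation). -/
def Assumption2 {n T p : ℕ} (X : Fin n → Fin T → EuclideanSpace ℝ (Fin p))
    (Y : Fin n → Fin T → Bool) : Prop :=
  ¬ ∃ βstar : EuclideanSpace ℝ (Fin p), βstar ≠ 0 ∧
      ∀ i, ∀ d ∈ altSet T (Y i),
        0 ≤ ∑ t, (bval (d t) - bval (Y i t)) * ⟪X i t, βstar⟫

/-- The vectors `v_{i,d} = ∑_t (d_t − Y_{it}) X_{it}`. -/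
def vvec {n T p : ℕ} (X : Fin n → Fin T → EuclideanSpace ℝ (Fin p))
    (Y : Fin n → Fin T → Bool) (i : Fin n) (d : Fin T → Bool) :
    EuclideanSpace ℝ (Fin p) :=
  ∑ t, (bval (d t) - bval (Y i t)) • X i t

/-- Inner product against a `vvec`, written coordinatewise. -/
lemma inner_vvec {n T p : ℕ} (X : Fin n → Fin T → EuclideanSpace ℝ (Fin p))
    (Y : Fin n → Fin T → Bool) (i : Fin n) (d : Fin T → Bool)
    (β : EuclideanSpace ℝ (Fin p)) :
    ⟪vvec X Y i d, β⟫ = ∑ t, (bval (d t) - bval (Y i t)) * ⟪X i t, β⟫ := by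
  simp only [vvec, sum_inner, real_inner_smul_left]

/-- A convex (in fact dense, hence full) cone generated by finitely many vectors. -/
def genCone {E : Type*} [NormedAddCommGroup E] [InnerProductSpace ℝ E]
    {J : Type*} [Fintype J] (v : J → E) : ConvexCone ℝ E where
  carrier := {u | ∃ a : J → ℝ, (∀ j, 0 ≤ a j) ∧ ∑ j, a j • v j = u}
  smul_mem' := by
    rintro c hc u ⟨a, ha, rfl⟩
    exact ⟨fun j => c * a j, fun j => mul_nonneg hc.le (ha j), by
      rw [Finset.smul_sum]; simp [mul_smul]⟩
  add_mem' := by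
    rintro u ⟨a, ha, rfl⟩ w ⟨b, hb, rfl⟩
    exact ⟨a + b, fun j => add_nonneg (ha j) (hb j), by
      simp [add_smul, Finset.sum_add_distrib]⟩

/-- If for every nonzero `β` some `v j` has negative inner product with `β`,
then the cone generated by the `v j` is all of the space. -/
lemma genCone_eq_univ {E : Type*} [NormedAddCommGroup E] [InnerProductSpace ℝ E]
    [FiniteDimensional ℝ E] {J : Type*} [Fintype J] (v : J → E)
    (hsep : ∀ β : E, β ≠ 0 → ∃ j, ⟪v j, β⟫ < 0) :
    (genCone v : Set E) = Set.univ := by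
  classical
  set K := genCone v with hK
  have h0 : (0 : E) ∈ (K : Set E) :=
    ⟨fun _ => 0, fun _ => le_refl 0, by simp⟩
  have hvmem : ∀ j, v j ∈ (K : Set E) := by
    intro j
    exact ⟨fun j' => if j' = j then 1 else 0, fun j' => by positivity, by
      simp⟩
  -- the closure of the cone is everything
  have hclos : closure (K : Set E) = Set.univ := by
    by_contra hne
    obtain ⟨b, hb⟩ : ∃ b : E, b ∉ K.closure := by
      by_contra hall
      push_neg at hall
      apply hne
      rw [← ConvexCone.coe_closure]
      exact Set.eq_univ_of_forall hall
    obtain ⟨y, hy1, hy2⟩ : ∃ y, (∀ x ∈ K.closure, 0 ≤ ⟪x, y⟫) ∧ ⟪b, y⟫ < 0 := by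
      let C : ProperCone ℝ E :=
        { toSubmodule := K.closure.toPointedCone (ConvexCone.mem_closure.2 (subset_closure h0))
          isClosed' := by
            change IsClosed (K.closure : Set E)
            rw [ConvexCone.coe_closure]; exact isClosed_closure }
      exact C.hyperplane_separation' (x₀ := b) hb
    have hy0 : y ≠ 0 := by
      intro h; rw [h] at hy2; simp at hy2
    obtain ⟨j, hj⟩ := hsep y hy0
    have := hy1 (v j) (ConvexCone.mem_closure.2 (subset_closure (hvmem j)))
    linarith
  -- a dense convex set in a finite-dimensional space is everything
  have hconv : Convex ℝ (K : Set E) := K.convex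
  have hspan : affineSpan ℝ (K : Set E) = ⊤ := by
    have hclosed : IsClosed ((affineSpan ℝ (K : Set E) : Set E)) :=
      (affineSpan ℝ (K : Set E)).closed_of_finiteDimensional
    have hsub : closure (K : Set E) ⊆ (affineSpan ℝ (K : Set E) : Set E) :=
      hclosed.closure_subset_iff.2 (subset_affineSpan ℝ _)
    rw [hclos] at hsub
    ext x
    simp only [AffineSubspace.mem_top, iff_true]
    exact hsub (Set.mem_univ x)
  obtain ⟨x, hx⟩ := hconv.interior_nonempty_iff_affineSpan_eq_top.2 hspan
  apply Set.eq_univ_of_forall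
  intro z
  have hw : ((2 : ℝ) • z - x) ∈ closure (K : Set E) := by rw [hclos]; trivial
  have hz : ((1 : ℝ)/2) • x + ((1 : ℝ)/2) • ((2 : ℝ) • z - x) ∈ interior (K : Set E) :=
    hconv.combo_interior_closure_mem_interior hx hw (by norm_num) (by norm_num) (by norm_num)
  have heq : ((1 : ℝ)/2) • x + ((1 : ℝ)/2) • ((2 : ℝ) • z - x) = z := by
    rw [smul_sub, smul_smul]; ring_nf; module
  rw [heq] at hz
  exact interior_subset hz

/-- The other direction of Theorem 2: full rank and no separation yield coefficients
`c_{i,d} ≥ 1` with `∑ c_{i,d} v_{i,d} = 0`, hence the minimum of the quadratic program is zero. -/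
theorem stmt5 {n T p : ℕ} (hn : 1 ≤ n) (hT : 1 ≤ T) (hp : 1 ≤ p)
    (X : Fin n → Fin T → EuclideanSpace ℝ (Fin p)) (Y : Fin n → Fin T → Bool)
    (h1 : Assumption1 X Y) (h2 : Assumption2 X Y) :
    (∃ c : RowIdx n T Y → ℝ, (∀ j, 1 ≤ c j) ∧
      ∑ j : RowIdx n T Y, c j • vvec X Y j.1 j.2.1 = 0) ∧
    sInf {r : ℝ | ∃ c : RowIdx n T Y → ℝ, (∀ j, 1 ≤ c j) ∧
      r = ‖∑ j : RowIdx n T Y, c j • vvec X Y j.1 j.2.1‖ ^ 2} = 0 := by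
  classical
  set v : RowIdx n T Y → EuclideanSpace ℝ (Fin p) := fun j => vvec X Y j.1 j.2.1 with hv
  -- Assumption 2 gives the separation hypothesis
  have hsep : ∀ β : EuclideanSpace ℝ (Fin p), β ≠ 0 → ∃ j, ⟪v j, β⟫ < 0 := by
    intro β hβ
    by_contra hno
    push_neg at hno
    apply h2
    refine ⟨β, hβ, fun i d hd => ?_⟩
    have := hno ⟨i, ⟨d, hd⟩⟩
    rw [hv] at this
    simp only at this
    rw [inner_vvec] at this
    exact this
  have huniv := genCone_eq_univ v hsep
  -- obtain nonnegative coefficients for `-∑ v j`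
  have hmem : (-(∑ j, v j)) ∈ (genCone v : Set (EuclideanSpace ℝ (Fin p))) := by
    rw [huniv]; trivial
  obtain ⟨a, ha, hsum⟩ := hmem
  -- the coefficients
  have key : ∑ j : RowIdx n T Y, (a j + 1) • v j = 0 := by
    have h' : ∑ j, (a j + 1) • v j = (∑ j, a j • v j) + ∑ j, v j := by
      simp [add_smul, Finset.sum_add_distrib]
    rw [h', hsum]; simp
  refine ⟨⟨fun j => a j + 1, fun j => le_add_of_nonneg_left (ha j), key⟩, ?_⟩
  · -- the infimum is zero
    have hzero_mem : (0 : ℝ) ∈ {r : ℝ | ∃ c : RowIdx n T Y → ℝ, (∀ j, 1 ≤ c j) ∧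
        r = ‖∑ j : RowIdx n T Y, c j • vvec X Y j.1 j.2.1‖ ^ 2} := by
      refine ⟨fun j => a j + 1, fun j => le_add_of_nonneg_left (ha j), ?_⟩
      rw [show (∑ j : RowIdx n T Y, (a j + 1) • vvec X Y j.1 j.2.1) = 0 from key]
      simp
    refine le_antisymm (csInf_le ⟨0, ?_⟩ hzero_mem) (le_csInf ⟨0, hzero_mem⟩ ?_)
    · rintro r ⟨c, hc, rfl⟩
      positivity
    · rintro r ⟨c, hc, rfl⟩
      positivity
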